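/- Let E ⊆ 𝕋 be closed, let g ∈ C(E), let ε > 0 and let m ∈ ℕ. Then the set { f ∈ H² \ {0} : ‖Q_m(1/f) − g‖_{C(E)} < ε } is open in H². -/

import Mathlib

open MeasureTheory Filter Metric Polynomial

noncomputable section

/-- The Hardy space `H²`, modelled as the space `ℓ²(ℕ, ℂ)` of square-summable
Taylor-coefficient sequences: `f : H2` represents the holomorphic function
`z ↦ ∑ₖ f k * z ^ k` on the unit disc, and the `lp`-norm of `f` is its `H²` norm. -/
abbrev H2 := lp (fun _ : ℕ => ℂ) 2

/-- Value at `z` of the holomorphic function with Taylor coefficients `f`. -/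
def h2Val (f : H2) (z : ℂ) : ℂ := ∑' k, f k * z ^ k

/-- `n`-th Taylor coefficient of the product of a polynomial `q` with the power series
having coefficients `a`. -/
def coeffMul (q : Polynomial ℂ) (a : ℕ → ℂ) (n : ℕ) : ℂ :=
  ∑ j ∈ Finset.range (n + 1), q.coeff j * a (n - j)

/-- Taylor coefficients of `q·f − 1`. -/
def errSeq (q : Polynomial ℂ) (f : H2) (n : ℕ) : ℂ :=
  coeffMul q (fun k => f k) n - if n = 0 then 1 else 0

/-- The `H²` norm `‖q·f − 1‖_{H²}`. -/
def h2ErrNorm (q : Polynomial ℂ) (f : H2) : ℝ :=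
  Real.sqrt (∑' n, ‖errSeq q f n‖ ^ 2)

/-- `Q` is an optimal polynomial approximant of order `n` of `1/f`: it has degree at
most `n` and minimizes `‖q·f − 1‖_{H²}` over all polynomials `q` of degree at most `n`. -/
def IsOpa (n : ℕ) (f : H2) (Q : Polynomial ℂ) : Prop :=
  Q.degree ≤ (n : WithBot ℕ) ∧
    ∀ q : Polynomial ℂ, q.degree ≤ (n : WithBot ℕ) → h2ErrNorm Q f ≤ h2ErrNorm q f

open Classical in
/-- The optimal polynomial approximant `Q_n(1/f)` (well defined whenever the minimizer
exists and is unique, which is the case for every `f ≠ 0`). -/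
def opa (n : ℕ) (f : H2) : Polynomial ℂ :=
  if h : ∃! Q : Polynomial ℂ, IsOpa n f Q then h.choose else 0

/-- Sup-distance of two functions over a set `E` (the distance in `C(E)`). -/
def supDist (E : Set ℂ) (u v : ℂ → ℂ) : ℝ := ⨆ z : E, ‖u z - v z‖

/-- `f` has universal optimal polynomial approximants on `E`: every continuous function
on `E` is the uniform limit on `E` of a subsequence of the sequence `Q_n(1/f)`. -/
def HasUniversalOpa (E : Set ℂ) (f : H2) : Prop :=
  ∀ g : ℂ → ℂ, ContinuousOn g E →
    ∃ m : ℕ → ℕ, StrictMono m ∧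
      TendstoUniformlyOn (fun s z => (opa (m s) f).eval z) g atTop E

/-- `E ⊆ 𝕋` has arc-length (Lebesgue) measure zero. -/
def circleNull (E : Set ℂ) : Prop :=
  volume {θ : ℝ | Complex.exp (θ * Complex.I) ∈ E} = 0


open scoped InnerProductSpace ENNReal

namespace OpaAux


lemma two_toReal : ((2:ℝ≥0∞)).toReal = 2 := by norm_num

def shiftFun (i : ℕ) (f : ℕ → ℂ) (n : ℕ) : ℂ := if i ≤ n then f (n - i) else 0

lemma shiftFun_add_left (i k : ℕ) (f : ℕ → ℂ) : shiftFun i f (i + k) = f k := by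
  simp [shiftFun]

lemma summable_norm_rpow (f : H2) : Summable fun n => ‖(f : ℕ → ℂ) n‖ ^ (2:ℝ) := by
  have := lp.memℓp f
  rw [Memℓp] at this
  simpa [two_toReal] using this

lemma tsum_shift (i : ℕ) (F : ℕ → ℂ) :
    ∑' n, ‖shiftFun i F n‖ ^ (2:ℝ) = ∑' k, ‖F k‖ ^ (2:ℝ) := by
  have hinj : Function.Injective fun k => i + k := add_right_injective i
  have hsupp : Function.support (fun n => ‖shiftFun i F n‖ ^ (2:ℝ)) ⊆
      Set.range fun k => i + k := by
    intro n hn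
    rcases le_or_gt i n with h | h
    · exact ⟨n - i, by show i + (n - i) = n; omega⟩
    · exfalso; apply hn; simp [shiftFun, not_le.2 h, Real.zero_rpow]
  have := hinj.tsum_eq (f := fun n => ‖shiftFun i F n‖ ^ (2:ℝ)) hsupp
  rw [← this]
  congr 1; funext k; show ‖shiftFun i F (i+k)‖ ^ (2:ℝ) = _; rw [shiftFun_add_left]

lemma summable_shift (i : ℕ) (f : H2) :
    Summable fun n => ‖shiftFun i (f : ℕ → ℂ) n‖ ^ (2:ℝ) := by
  have hinj : Function.Injective fun k => i + k := add_right_injective i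
  rw [← Function.Injective.summable_iff hinj]
  · apply (summable_norm_rpow f).congr
    intro k; rw [Function.comp_apply (g := fun k => i + k), shiftFun_add_left]
  · intro n hn
    have : ¬ i ≤ n := fun h => hn ⟨n - i, by show i + (n - i) = n; omega⟩
    simp [shiftFun, this, Real.zero_rpow]

def S (i : ℕ) (f : H2) : H2 :=
  ⟨shiftFun i f, memℓp_gen (by simpa [two_toReal] using summable_shift i f)⟩

lemma S_apply (i : ℕ) (f : H2) (n : ℕ) :
    (S i f : ℕ → ℂ) n = if i ≤ n then f (n - i) else 0 := rfl

lemma S_sub (i : ℕ) (f g : H2) : S i (f - g) = S i f - S i g := by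
  ext n
  rw [lp.coeFn_sub, Pi.sub_apply, S_apply, S_apply, S_apply]
  have : ((f - g : H2) : ℕ → ℂ) = (f : ℕ → ℂ) - g := lp.coeFn_sub f g
  by_cases h : i ≤ n <;> simp [h, this]

lemma norm_S (i : ℕ) (f : H2) : ‖S i f‖ = ‖f‖ := by
  have h2 : (0:ℝ) < (2:ℝ≥0∞).toReal := by norm_num
  rw [lp.norm_eq_tsum_rpow h2, lp.norm_eq_tsum_rpow h2]
  congr 1
  simp only [two_toReal]
  exact tsum_shift i (f : ℕ → ℂ)

lemma continuous_S (i : ℕ) : Continuous (S i) := by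
  apply (LipschitzWith.of_dist_le_mul (K := 1) ?_).continuous
  intro f g
  rw [dist_eq_norm, dist_eq_norm, ← S_sub, norm_S]
  simp


def Phi (m : ℕ) (f : H2) (c : Fin (m+1) → ℂ) : H2 := ∑ j : Fin (m+1), c j • S (j:ℕ) f

lemma coeFn_sum {ι : Type} (s : Finset ι) (v : ι → H2) (n : ℕ) :
    ((∑ i ∈ s, v i : H2) : ℕ → ℂ) n = ∑ i ∈ s, (v i : ℕ → ℂ) n := by
  classical
  induction s using Finset.induction_on with
  | empty => simp
  | insert x s hx ih =>
      rw [Finset.sum_insert hx, Finset.sum_insert hx, lp.coeFn_add, Pi.add_apply, ih]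

lemma Phi_apply (m : ℕ) (f : H2) (c : Fin (m+1) → ℂ) (n : ℕ) :
    ((Phi m f c : H2) : ℕ → ℂ) n = ∑ j : Fin (m+1), c j * shiftFun (j:ℕ) f n := by
  rw [Phi, coeFn_sum]
  refine Finset.sum_congr rfl fun j _ => ?_
  rw [lp.coeFn_smul, Pi.smul_apply, smul_eq_mul, S_apply]
  rfl

def e0 : H2 := lp.single 2 0 1

lemma e0_apply (n : ℕ) : (e0 : ℕ → ℂ) n = if n = 0 then 1 else 0 := by
  rw [e0, lp.single_apply]
  by_cases h : n = 0 <;> simp [h]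

lemma coeffMul_eq (m : ℕ) (q : Polynomial ℂ) (hq : q.degree ≤ (m : WithBot ℕ)) (f : H2) (n : ℕ) :
    coeffMul q (fun k => f k) n = ∑ j : Fin (m+1), q.coeff j * shiftFun (j:ℕ) f n := by
  classical
  have h1 : coeffMul q (fun k => f k) n
      = ∑ j ∈ Finset.range (n+1), q.coeff j * shiftFun j f n := by
    refine Finset.sum_congr rfl fun j hj => ?_
    rw [Finset.mem_range] at hj
    rw [shiftFun]
    rw [if_pos (by omega)]
  have h2 : ∑ j ∈ Finset.range (n+1), q.coeff j * shiftFun j f n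
      = ∑ j ∈ Finset.range (max m n + 1), q.coeff j * shiftFun j f n := by
    refine Finset.sum_subset ?_ ?_
    · intro j hj; rw [Finset.mem_range] at *; omega
    · intro j _ hj
      rw [Finset.mem_range] at hj
      rw [shiftFun, if_neg (by omega), mul_zero]
  have h3 : ∑ j : Fin (m+1), q.coeff j * shiftFun (j:ℕ) f n
      = ∑ j ∈ Finset.range (m+1), q.coeff j * shiftFun j f n := by
    rw [Finset.sum_range fun j => q.coeff j * shiftFun j f n]
  have h4 : ∑ j ∈ Finset.range (m+1), q.coeff j * shiftFun j f n
      = ∑ j ∈ Finset.range (max m n + 1), q.coeff j * shiftFun j f n := by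
    refine Finset.sum_subset ?_ ?_
    · intro j hj; rw [Finset.mem_range] at *; omega
    · intro j _ hj
      rw [Finset.mem_range] at hj
      have : q.coeff j = 0 := Polynomial.coeff_eq_zero_of_degree_lt
        (lt_of_le_of_lt hq (by exact_mod_cast Nat.lt_of_lt_of_le (by omega) (le_refl j)))
      rw [this, zero_mul]
  rw [h1, h2, h3, h4]

lemma errSeq_eq (m : ℕ) (q : Polynomial ℂ) (hq : q.degree ≤ (m : WithBot ℕ)) (f : H2) (n : ℕ) :
    errSeq q f n = ((Phi m f (fun j => q.coeff j) - e0 : H2) : ℕ → ℂ) n := by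
  rw [lp.coeFn_sub, Pi.sub_apply, Phi_apply, e0_apply, errSeq, coeffMul_eq m q hq]

lemma h2ErrNorm_eq (m : ℕ) (q : Polynomial ℂ) (hq : q.degree ≤ (m : WithBot ℕ)) (f : H2) :
    h2ErrNorm q f = ‖(Phi m f (fun j => q.coeff j) - e0 : H2)‖ := by
  have h2 : (0:ℝ) < (2:ℝ≥0∞).toReal := by norm_num
  rw [h2ErrNorm, lp.norm_eq_tsum_rpow h2, Real.sqrt_eq_rpow, two_toReal]
  congr 1
  refine tsum_congr fun n => ?_
  rw [errSeq_eq m q hq f n]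
  rw [show (2:ℝ) = ((2:ℕ):ℝ) from by norm_num, Real.rpow_natCast]

lemma Phi_sub (m : ℕ) (f : H2) (c c' : Fin (m+1) → ℂ) :
    Phi m f c - Phi m f c' = Phi m f (c - c') := by
  rw [Phi, Phi, Phi, ← Finset.sum_sub_distrib]
  refine Finset.sum_congr rfl fun j _ => ?_
  rw [Pi.sub_apply, sub_smul]

lemma Phi_injective (m : ℕ) (f : H2) (hf : f ≠ 0) : Function.Injective (Phi m f) := by
  have hker : ∀ c, Phi m f c = 0 → c = 0 := by
    intro c hc
    -- least nonzero coefficient of f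
    have hex : ∃ n, (f : ℕ → ℂ) n ≠ 0 := by
      by_contra h
      push_neg at h
      exact hf (lp.eq_zero_iff_coeFn_eq_zero.2 (funext h))
    classical
    set k := Nat.find hex with hk
    have hfk : (f : ℕ → ℂ) k ≠ 0 := Nat.find_spec hex
    have hmin : ∀ j, j < k → (f : ℕ → ℂ) j = 0 := fun j hj => not_not.1 (Nat.find_min hex hj)
    have claim : ∀ i : ℕ, ∀ hi : i < m + 1, c ⟨i, hi⟩ = 0 := by
      intro i
      induction i using Nat.strong_induction_on with
      | _ i IH =>
        intro hi
        have h0 : ((Phi m f c : H2) : ℕ → ℂ) (k + i) = 0 := by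
          rw [hc]; exact congrFun (lp.coeFn_zero _ _) (k + i)
        rw [Phi_apply] at h0
        have hsum : ∑ j : Fin (m+1), c j * shiftFun (j:ℕ) f (k+i)
            = c ⟨i, hi⟩ * (f : ℕ → ℂ) k := by
          have hsh : shiftFun i (f : ℕ → ℂ) (k+i) = (f : ℕ → ℂ) k := by
            have h1 : k + i - i = k := by omega
            rw [shiftFun, if_pos (Nat.le_add_left i k), h1]
          rw [← hsh]
          refine Finset.sum_eq_single (⟨i, hi⟩ : Fin (m+1)) ?_
            (fun h => absurd (Finset.mem_univ _) h)
          intro j _ hj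
          rcases lt_trichotomy (j:ℕ) i with h | h | h
          · have : c j = 0 := by
              have := IH (j:ℕ) h j.2
              simpa using this
            rw [this, zero_mul]
          · exact absurd (Fin.ext h) hj
          · rw [shiftFun]
            by_cases hle : (j:ℕ) ≤ k + i
            · rw [if_pos hle, hmin _ (by omega), mul_zero]
            · rw [if_neg hle, mul_zero]
        rw [hsum] at h0
        exact (mul_eq_zero.1 h0).resolve_right hfk
    funext j
    exact claim j.1 j.2
  intro c c' h
  have : Phi m f (c - c') = 0 := by rw [← Phi_sub, h, sub_self]
  have := hker _ this
  exact sub_eq_zero.1 this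

def gram (m : ℕ) (f : H2) : Matrix (Fin (m+1)) (Fin (m+1)) ℂ :=
  fun i j => ⟪S (i:ℕ) f, S (j:ℕ) f⟫_ℂ

def bvec (m : ℕ) (f : H2) : Fin (m+1) → ℂ := fun i => ⟪S (i:ℕ) f, e0⟫_ℂ

lemma inner_Phi (m : ℕ) (f : H2) (c : Fin (m+1) → ℂ) (i : Fin (m+1)) :
    ⟪S (i:ℕ) f, Phi m f c⟫_ℂ = (gram m f).mulVec c i := by
  rw [Phi, inner_sum, Matrix.mulVec, dotProduct]
  refine Finset.sum_congr rfl fun j _ => ?_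
  rw [inner_smul_right, gram, mul_comm]

lemma Phi_zero (m : ℕ) (f : H2) : Phi m f 0 = 0 := by
  simp [Phi]

lemma gram_det_ne (m : ℕ) (f : H2) (hf : f ≠ 0) : (gram m f).det ≠ 0 := by
  intro h
  obtain ⟨v, hv0, hv⟩ := (Matrix.exists_mulVec_eq_zero_iff).2 h
  apply hv0
  have h1 : Phi m f v = 0 := by
    have hz : ⟪Phi m f v, Phi m f v⟫_ℂ = 0 := by
      nth_rewrite 1 [Phi]
      rw [sum_inner]
      refine Finset.sum_eq_zero fun j _ => ?_
      rw [inner_smul_left, inner_Phi, hv]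
      simp
    exact inner_self_eq_zero.1 hz
  have h2 : Phi m f v = Phi m f 0 := by rw [h1, Phi_zero]
  exact Phi_injective m f hf h2

def cvec (m : ℕ) (f : H2) : Fin (m+1) → ℂ := (gram m f)⁻¹.mulVec (bvec m f)

lemma normal (m : ℕ) (f : H2) (hf : f ≠ 0) (i : Fin (m+1)) :
    ⟪S (i:ℕ) f, Phi m f (cvec m f) - e0⟫_ℂ = 0 := by
  rw [inner_sub_right, inner_Phi, cvec, Matrix.mulVec_mulVec,
    Matrix.mul_nonsing_inv _ (isUnit_iff_ne_zero.2 (gram_det_ne m f hf)),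
    Matrix.one_mulVec, bvec, sub_self]

lemma ortho (m : ℕ) (f : H2) (hf : f ≠ 0) (d : Fin (m+1) → ℂ) :
    ⟪e0 - Phi m f (cvec m f), Phi m f d⟫_ℂ = 0 := by
  nth_rewrite 2 [Phi]
  rw [inner_sum]
  refine Finset.sum_eq_zero fun j _ => ?_
  rw [inner_smul_right]
  have h2 : ⟪e0 - Phi m f (cvec m f), S (j:ℕ) f⟫_ℂ = 0 := by
    have h3 := inner_eq_zero_symm.1 (normal m f hf j)
    have h4 : e0 - Phi m f (cvec m f) = -(Phi m f (cvec m f) - e0) := by abel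
    rw [h4, inner_neg_left, h3, neg_zero]
  rw [h2, mul_zero]

lemma key_min (m : ℕ) (f : H2) (hf : f ≠ 0) (c' : Fin (m+1) → ℂ) :
    ‖Phi m f (cvec m f) - e0‖ ≤ ‖Phi m f c' - e0‖ := by
  set v := Phi m f (cvec m f) with hv
  set w := Phi m f c' with hw
  have hperp : ⟪e0 - v, v - w⟫_ℂ = 0 := by
    have h1 : v - w = Phi m f (cvec m f - c') := Phi_sub m f _ _
    rw [h1]; exact ortho m f hf _
  have hpyth : ‖e0 - w‖^2 = ‖e0 - v‖^2 + ‖v - w‖^2 := by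
    have h := norm_add_sq (𝕜 := ℂ) (e0 - v) (v - w)
    rw [hperp] at h
    have h2 : e0 - v + (v - w) = e0 - w := by abel
    rw [h2] at h
    simpa using h
  have hsq : ‖e0 - v‖^2 ≤ ‖e0 - w‖^2 := by
    rw [hpyth]; nlinarith [sq_nonneg ‖v - w‖]
  have := Real.sqrt_le_sqrt hsq
  rw [Real.sqrt_sq (norm_nonneg _), Real.sqrt_sq (norm_nonneg _)] at this
  rw [norm_sub_rev v e0, norm_sub_rev w e0]
  exact this

lemma key_uniq (m : ℕ) (f : H2) (hf : f ≠ 0) (c' : Fin (m+1) → ℂ)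
    (hle : ‖Phi m f c' - e0‖ ≤ ‖Phi m f (cvec m f) - e0‖) : c' = cvec m f := by
  set v := Phi m f (cvec m f) with hv
  set w := Phi m f c' with hw
  have hperp : ⟪e0 - v, v - w⟫_ℂ = 0 := by
    have h1 : v - w = Phi m f (cvec m f - c') := Phi_sub m f _ _
    rw [h1]; exact ortho m f hf _
  have hpyth : ‖e0 - w‖^2 = ‖e0 - v‖^2 + ‖v - w‖^2 := by
    have h := norm_add_sq (𝕜 := ℂ) (e0 - v) (v - w)
    rw [hperp] at h
    have h2 : e0 - v + (v - w) = e0 - w := by abel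
    rw [h2] at h
    simpa using h
  have hle2 : ‖e0 - w‖ ≤ ‖e0 - v‖ := by
    rw [norm_sub_rev e0 w, norm_sub_rev e0 v]; exact hle
  have hvw : ‖v - w‖^2 ≤ 0 := by
    nlinarith [norm_nonneg (e0 - w), norm_nonneg (e0 - v)]
  have : ‖v - w‖ = 0 := by nlinarith [norm_nonneg (v - w), sq_nonneg ‖v - w‖]
  have hvweq : v = w := by
    have := norm_sub_eq_zero_iff.1 this
    exact this
  exact (Phi_injective m f hf hvweq.symm)

def Pf (m : ℕ) (f : H2) : Polynomial ℂ :=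
  ∑ j : Fin (m+1), Polynomial.monomial (j:ℕ) (cvec m f j)

lemma Pf_degree (m : ℕ) (f : H2) : (Pf m f).degree ≤ (m : WithBot ℕ) := by
  refine le_trans (Polynomial.degree_sum_le _ _) ?_
  refine Finset.sup_le fun j _ => ?_
  refine le_trans (Polynomial.degree_monomial_le _ _) ?_
  exact_mod_cast Nat.cast_le.2 (by omega : (j:ℕ) ≤ m)

lemma Pf_coeff (m : ℕ) (f : H2) (j : Fin (m+1)) :
    (Pf m f).coeff (j:ℕ) = cvec m f j := by
  rw [Pf, Polynomial.finset_sum_coeff]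
  rw [Finset.sum_eq_single j (fun i _ hij => by
    rw [Polynomial.coeff_monomial, if_neg (fun h => hij (Fin.ext h))])
    (fun h => absurd (Finset.mem_univ _) h)]
  rw [Polynomial.coeff_monomial, if_pos rfl]

lemma Pf_coeff_fun (m : ℕ) (f : H2) :
    (fun j : Fin (m+1) => (Pf m f).coeff (j:ℕ)) = cvec m f := funext (Pf_coeff m f)

lemma isOpa_Pf (m : ℕ) (f : H2) (hf : f ≠ 0) : IsOpa m f (Pf m f) := by
  refine ⟨Pf_degree m f, fun q hq => ?_⟩
  rw [h2ErrNorm_eq m (Pf m f) (Pf_degree m f) f, h2ErrNorm_eq m q hq f, Pf_coeff_fun]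
  exact key_min m f hf _

lemma existsUnique_opa (m : ℕ) (f : H2) (hf : f ≠ 0) : ∃! Q, IsOpa m f Q := by
  refine ⟨Pf m f, isOpa_Pf m f hf, fun Q hQ => ?_⟩
  have hle := hQ.2 (Pf m f) (Pf_degree m f)
  rw [h2ErrNorm_eq m (Pf m f) (Pf_degree m f) f, h2ErrNorm_eq m Q hQ.1 f, Pf_coeff_fun] at hle
  have hc := key_uniq m f hf _ hle
  ext n
  by_cases hn : n < m + 1
  · have h1 : Q.coeff n = cvec m f ⟨n, hn⟩ := congrFun hc ⟨n, hn⟩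
    have h2 : (Pf m f).coeff n = cvec m f ⟨n, hn⟩ := Pf_coeff m f ⟨n, hn⟩
    rw [h1, h2]
  · rw [Polynomial.coeff_eq_zero_of_degree_lt
        (lt_of_le_of_lt hQ.1 (by exact_mod_cast by omega : (m : WithBot ℕ) < n)),
      Polynomial.coeff_eq_zero_of_degree_lt
        (lt_of_le_of_lt (Pf_degree m f) (by exact_mod_cast by omega : (m : WithBot ℕ) < n))]

lemma opa_eq (m : ℕ) (f : H2) (hf : f ≠ 0) : opa m f = Pf m f := by
  have h := existsUnique_opa m f hf
  rw [opa, dif_pos h]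
  exact (h.choose_spec.2 (Pf m f) (isOpa_Pf m f hf)).symm

lemma Pf_eval (m : ℕ) (f : H2) (z : ℂ) :
    (Pf m f).eval z = ∑ j : Fin (m+1), cvec m f j * z ^ (j:ℕ) := by
  rw [Pf, Polynomial.eval_finset_sum]
  refine Finset.sum_congr rfl fun j _ => ?_
  rw [Polynomial.eval_monomial]

lemma continuous_gram (m : ℕ) : Continuous fun f : H2 => gram m f := by
  apply continuous_matrix
  intro i j
  exact continuous_inner.comp ((continuous_S (i:ℕ)).prodMk (continuous_S (j:ℕ)))

lemma continuous_bvec (m : ℕ) (i : Fin (m+1)) : Continuous fun f : H2 => bvec m f i :=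
  continuous_inner.comp ((continuous_S (i:ℕ)).prodMk continuous_const)

lemma cvec_eq (m : ℕ) (f : H2) (j : Fin (m+1)) :
    cvec m f j = ∑ i, ((gram m f).det)⁻¹ * (gram m f).adjugate j i * bvec m f i := by
  rw [cvec, Matrix.inv_def, Ring.inverse_eq_inv']
  simp [Matrix.mulVec, dotProduct, Matrix.smul_apply, smul_eq_mul]

lemma continuousAt_cvec (m : ℕ) (f₀ : H2) (hf₀ : f₀ ≠ 0) (j : Fin (m+1)) :
    ContinuousAt (fun f => cvec m f j) f₀ := by
  have hdet : ContinuousAt (fun f : H2 => (gram m f).det) f₀ :=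
    ((continuous_gram m).matrix_det).continuousAt
  have hinv : ContinuousAt (fun f : H2 => ((gram m f).det)⁻¹) f₀ :=
    hdet.inv₀ (gram_det_ne m f₀ hf₀)
  have : ContinuousAt
      (fun f : H2 => ∑ i, ((gram m f).det)⁻¹ * (gram m f).adjugate j i * bvec m f i) f₀ := by
    refine tendsto_finset_sum _ fun i _ => ?_
    exact (hinv.mul (((continuous_gram m).matrix_adjugate.matrix_elem j i).continuousAt)).mul
      (continuous_bvec m i).continuousAt
  refine this.congr ?_
  filter_upwards with f
  rw [cvec_eq]

end OpaAux

set_option maxHeartbeats 1000000 in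
set_option synthInstance.maxHeartbeats 400000 in
/-- For closed `E ⊆ 𝕋`, `g ∈ C(E)`, `ε > 0` and `m ∈ ℕ`, the set
`{f ∈ H² \ {0} : ‖Q_m(1/f) − g‖_{C(E)} < ε}` is open in `H²`. -/
theorem isOpen_opa_close (E : Set ℂ) (hE : E ⊆ sphere (0 : ℂ) 1) (hEclosed : IsClosed E)
    (g : ℂ → ℂ) (hg : ContinuousOn g E) (ε : ℝ) (hε : 0 < ε) (m : ℕ) :
    IsOpen {f : H2 | f ≠ 0 ∧ supDist E (fun z => (opa m f).eval z) g < ε} := by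
  rw [isOpen_iff_mem_nhds]
  rintro f₀ ⟨hf0, hd⟩
  rw [OpaAux.opa_eq m f₀ hf0] at hd
  set d₀ := supDist E (fun z => (OpaAux.Pf m f₀).eval z) g with hd₀def
  have hd₀nonneg : 0 ≤ d₀ := Real.iSup_nonneg fun z => norm_nonneg _
  -- E is compact
  have hEcomp : IsCompact E :=
    Metric.isCompact_of_isClosed_isBounded hEclosed
      (Metric.isBounded_closedBall.subset (hE.trans Metric.sphere_subset_closedBall))
  -- the family for f₀ is bounded above
  have hbdd : BddAbove (Set.range fun z : E => ‖(OpaAux.Pf m f₀).eval (z:ℂ) - g (z:ℂ)‖) := by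
    have hcont : ContinuousOn (fun z : ℂ => ‖(OpaAux.Pf m f₀).eval z - g z‖) E :=
      ((((OpaAux.Pf m f₀).continuous).continuousOn.sub hg)).norm
    have h := (hEcomp.image_of_continuousOn hcont).bddAbove
    rwa [Set.image_eq_range] at h
  -- the modulus function
  set ρ : H2 → ℝ := fun f => ∑ j : Fin (m+1), ‖OpaAux.cvec m f j - OpaAux.cvec m f₀ j‖
    with hρdef
  have hρ0 : ρ f₀ = 0 := by simp [hρdef]
  have hρnonneg : ∀ f, 0 ≤ ρ f := fun f =>
    Finset.sum_nonneg fun j _ => norm_nonneg _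
  have hρcont : ContinuousAt ρ f₀ := by
    refine tendsto_finset_sum _ fun j _ => ?_
    exact (((OpaAux.continuousAt_cvec m f₀ hf0 j).sub continuousAt_const).norm)
  -- key bound
  have hkey : ∀ f : H2, f ≠ 0 →
      supDist E (fun z => (opa m f).eval z) g ≤ d₀ + ρ f := by
    intro f hf
    rw [OpaAux.opa_eq m f hf, supDist]
    refine Real.iSup_le (fun z => ?_) (add_nonneg hd₀nonneg (hρnonneg f))
    have hz1 : ‖(z:ℂ)‖ = 1 := mem_sphere_zero_iff_norm.1 (hE z.2)
    have hcoef : ‖(OpaAux.Pf m f).eval (z:ℂ) - (OpaAux.Pf m f₀).eval (z:ℂ)‖ ≤ ρ f := by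
      rw [OpaAux.Pf_eval, OpaAux.Pf_eval, ← Finset.sum_sub_distrib]
      refine le_trans (norm_sum_le _ _) ?_
      rw [hρdef]
      refine Finset.sum_le_sum fun j _ => ?_
      rw [← sub_mul, norm_mul, norm_pow, hz1, one_pow, mul_one]
    have htri : ‖(OpaAux.Pf m f).eval (z:ℂ) - g (z:ℂ)‖
        ≤ ‖(OpaAux.Pf m f₀).eval (z:ℂ) - g (z:ℂ)‖
          + ‖(OpaAux.Pf m f).eval (z:ℂ) - (OpaAux.Pf m f₀).eval (z:ℂ)‖ := by
      have h := norm_add_le ((OpaAux.Pf m f₀).eval (z:ℂ) - g (z:ℂ))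
        ((OpaAux.Pf m f).eval (z:ℂ) - (OpaAux.Pf m f₀).eval (z:ℂ))
      have h2 : (OpaAux.Pf m f₀).eval ↑z - g ↑z
          + ((OpaAux.Pf m f).eval ↑z - (OpaAux.Pf m f₀).eval ↑z)
          = (OpaAux.Pf m f).eval ↑z - g ↑z := by ring
      rwa [h2] at h
    refine le_trans htri (add_le_add ?_ hcoef)
    exact le_ciSup hbdd z
  -- assemble the neighbourhood
  have h1 : {f : H2 | f ≠ 0} ∈ nhds f₀ := isOpen_ne.mem_nhds hf0
  have h2 : ρ ⁻¹' (Set.Iio (ε - d₀)) ∈ nhds f₀ := by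
    refine hρcont.preimage_mem_nhds ?_
    rw [hρ0] at *
    exact Iio_mem_nhds (by rw [hρ0]; linarith)
  refine Filter.mem_of_superset (Filter.inter_mem h1 h2) ?_
  rintro f ⟨hf, hρf⟩
  refine ⟨hf, ?_⟩
  have hb := hkey f hf
  have hρf' : ρ f < ε - d₀ := hρf
  linarith

end
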